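/- If A and B are worms all of whose modalities are ≥ α and GLP_Λ proves A ↔ B, then for any worm C, GLP_Λ proves A⟨α⟩C ↔ B⟨α⟩C. -/
import Mathlib


inductive Formula (L : Type) : Type where
  | bot : Formula L
  | var : Nat → Formula L
  | imp : Formula L → Formula L → Formula L
  | box : L → Formula L → Formula L

namespace Formula

variable {L : Type}

def neg (φ : Formula L) : Formula L := imp φ bot
def top : Formula L := neg bot
def and (φ ψ : Formula L) : Formula L := neg (imp φ ψ.neg)
def or (φ ψ : Formula L) : Formula L := imp φ.neg ψ
def iff (φ ψ : Formula L) : Formula L := (imp φ ψ).and (imp ψ φ)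
def dia (α : L) (φ : Formula L) : Formula L := neg (box α φ.neg)

end Formula

open Formula

/-- Provability in the polymodal provability logic `GLP_Λ` over a linear order. -/
inductive GLP {L : Type} [LinearOrder L] : Formula L → Prop where
  | k1 : ∀ φ ψ : Formula L, GLP (φ.imp (ψ.imp φ))
  | k2 : ∀ φ ψ χ : Formula L, GLP ((φ.imp (ψ.imp χ)).imp ((φ.imp ψ).imp (φ.imp χ)))
  | k3 : ∀ φ ψ : Formula L, GLP ((φ.neg.imp ψ.neg).imp (ψ.imp φ))
  | dist : ∀ (α : L) (φ ψ : Formula L), GLP ((Formula.box α (φ.imp ψ)).imp ((Formula.box α φ).imp (Formula.box α ψ)))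
  | lob : ∀ (α : L) (φ : Formula L), GLP ((Formula.box α ((Formula.box α φ).imp φ)).imp (Formula.box α φ))
  | trans : ∀ (α β : L) (φ : Formula L), α ≤ β → GLP ((Formula.box α φ).imp (Formula.box β (Formula.box α φ)))
  | negintro : ∀ (α β : L) (φ : Formula L), α < β → GLP ((dia α φ).imp (Formula.box β (dia α φ)))
  | mono : ∀ (α β : L) (φ : Formula L), α ≤ β → GLP ((Formula.box α φ).imp (Formula.box β φ))
  | mp : ∀ φ ψ : Formula L, GLP (φ.imp ψ) → GLP φ → GLP ψ
  | nec : ∀ (α : L) (φ : Formula L), GLP φ → GLP (Formula.box α φ)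

/-- The worm (iterated consistency statement) associated to a list of modalities. -/
def worm {L : Type} : List L → Formula L
  | [] => Formula.top
  | α :: w => Formula.dia α (worm w)

/-- `Lt α A B` iff `GLP ⊢ B → ⟨α⟩A`. -/
def Lt {L : Type} [LinearOrder L] (α : L) (A B : List L) : Prop :=
  GLP ((worm B).imp (Formula.dia α (worm A)))

def Le {L : Type} [LinearOrder L] (α : L) (A B : List L) : Prop :=
  Lt α A B ∨ A = B

section Aux
variable {L : Type} [LinearOrder L]

private lemma gmp {φ ψ : Formula L} (h : GLP (φ.imp ψ)) (h2 : GLP φ) : GLP ψ :=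
  GLP.mp _ _ h h2

private lemma gid (φ : Formula L) : GLP (φ.imp φ) :=
  gmp (gmp (GLP.k2 φ (φ.imp φ) φ) (GLP.k1 φ (φ.imp φ))) (GLP.k1 φ φ)

private lemma gcomp {ψ χ : Formula L} (h : GLP (ψ.imp χ)) (φ : Formula L) :
    GLP ((φ.imp ψ).imp (φ.imp χ)) :=
  gmp (GLP.k2 φ ψ χ) (gmp (GLP.k1 (ψ.imp χ) φ) h)

private lemma gtrans {φ ψ χ : Formula L} (h1 : GLP (φ.imp ψ)) (h2 : GLP (ψ.imp χ)) :
    GLP (φ.imp χ) :=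
  gmp (gcomp h2 φ) h1

/-- Provability from a finite list of hypotheses (nested implications). -/
private def Ded (Γ : List (Formula L)) (φ : Formula L) : Prop :=
  GLP (Γ.foldr .imp φ)

private lemma dthm {Γ : List (Formula L)} {φ : Formula L} (h : GLP φ) : Ded Γ φ := by
  induction Γ with
  | nil => exact h
  | cons a Γ ih => exact gmp (GLP.k1 _ _) ih

private lemma chain_mp (Γ : List (Formula L)) (φ ψ : Formula L) :
    GLP ((Γ.foldr .imp (φ.imp ψ)).imp ((Γ.foldr .imp φ).imp (Γ.foldr .imp ψ))) := by
  induction Γ with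
  | nil => exact gid _
  | cons a Γ ih => exact gtrans (gcomp ih a) (GLP.k2 a _ _)

private lemma dmp {Γ : List (Formula L)} {φ ψ : Formula L}
    (h1 : Ded Γ (φ.imp ψ)) (h2 : Ded Γ φ) : Ded Γ ψ :=
  gmp (gmp (chain_mp Γ φ ψ) h1) h2

private lemma chain_weak (Γ : List (Formula L)) (φ : Formula L) :
    GLP (φ.imp (Γ.foldr .imp φ)) := by
  induction Γ with
  | nil => exact gid φ
  | cons a Γ ih => exact gtrans ih (GLP.k1 _ a)

private lemma dax0 {Γ : List (Formula L)} {φ : Formula L} : Ded (φ :: Γ) φ :=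
  chain_weak Γ φ

private lemma dax1 {Γ : List (Formula L)} {φ ψ : Formula L} : Ded (ψ :: φ :: Γ) φ :=
  gmp (GLP.k1 _ _) dax0

private lemma dax2 {Γ : List (Formula L)} {φ ψ χ : Formula L} : Ded (χ :: ψ :: φ :: Γ) φ :=
  gmp (GLP.k1 _ _) dax1

private lemma gefq (φ : Formula L) : GLP (Formula.bot.imp φ) :=
  gmp (GLP.k3 φ .bot) (gmp (GLP.k1 (Formula.bot.imp .bot) φ.neg) (gid .bot))

private lemma gdni (φ : Formula L) : GLP (φ.imp φ.neg.neg) :=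
  show Ded [φ, φ.neg] .bot from dmp dax1 dax0

private lemma gdne (φ : Formula L) : GLP (φ.neg.neg.imp φ) :=
  gmp (GLP.k3 φ φ.neg.neg) (gdni φ.neg)

private lemma gcp1 {φ ψ : Formula L} (h : GLP (φ.imp ψ)) : GLP (ψ.neg.imp φ.neg) :=
  show Ded [ψ.neg, φ] .bot from dmp dax0 (dmp (dthm h) dax1)

private lemma gcp2 {φ ψ : Formula L} (h : GLP (φ.neg.imp ψ.neg)) : GLP (ψ.imp φ) :=
  gmp (GLP.k3 φ ψ) h

private lemma gand_intro {φ ψ : Formula L} (h1 : GLP φ) (h2 : GLP ψ) : GLP (φ.and ψ) :=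
  show Ded [φ.imp ψ.neg] .bot from dmp (dmp dax0 (dthm h1)) (dthm h2)

private lemma gand_left (φ ψ : Formula L) : GLP ((φ.and ψ).imp φ) := by
  refine gcp2 (gtrans ?_ (gdni (φ.imp ψ.neg)))
  exact show Ded [φ.neg, φ] ψ.neg from dmp (dthm (gefq ψ.neg)) (dmp dax0 dax1)

private lemma gand_right (φ ψ : Formula L) : GLP ((φ.and ψ).imp ψ) :=
  gcp2 (gtrans (GLP.k1 ψ.neg φ) (gdni (φ.imp ψ.neg)))

private lemma gand_imp_intro {χ φ ψ : Formula L} (h1 : GLP (χ.imp φ)) (h2 : GLP (χ.imp ψ)) :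
    GLP (χ.imp (φ.and ψ)) :=
  show Ded [χ, φ.imp ψ.neg] .bot from
    dmp (dmp dax1 (dmp (dthm h1) dax0)) (dmp (dthm h2) dax0)

private lemma giff_intro {φ ψ : Formula L} (h1 : GLP (φ.imp ψ)) (h2 : GLP (ψ.imp φ)) :
    GLP (φ.iff ψ) := gand_intro h1 h2

private lemma giff_mp {φ ψ : Formula L} (h : GLP (φ.iff ψ)) : GLP (φ.imp ψ) :=
  gmp (gand_left _ _) h

private lemma giff_mpr {φ ψ : Formula L} (h : GLP (φ.iff ψ)) : GLP (ψ.imp φ) :=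
  gmp (gand_right _ _) h

private lemma giff_symm {φ ψ : Formula L} (h : GLP (φ.iff ψ)) : GLP (ψ.iff φ) :=
  giff_intro (giff_mpr h) (giff_mp h)

private lemma giff_trans {φ ψ χ : Formula L} (h1 : GLP (φ.iff ψ)) (h2 : GLP (ψ.iff χ)) :
    GLP (φ.iff χ) :=
  giff_intro (gtrans (giff_mp h1) (giff_mp h2)) (gtrans (giff_mpr h2) (giff_mpr h1))

private lemma gbox_mono {β : L} {φ ψ : Formula L} (h : GLP (φ.imp ψ)) :
    GLP ((Formula.box β φ).imp (Formula.box β ψ)) :=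
  gmp (GLP.dist β φ ψ) (GLP.nec β _ h)

private lemma gdia_mono {β : L} {φ ψ : Formula L} (h : GLP (φ.imp ψ)) :
    GLP ((Formula.dia β φ).imp (Formula.dia β ψ)) :=
  gcp1 (gbox_mono (gcp1 h))

private lemma gbox_iff {β : L} {φ ψ : Formula L} (h : GLP (φ.iff ψ)) :
    GLP ((Formula.box β φ).iff (Formula.box β ψ)) :=
  giff_intro (gbox_mono (giff_mp h)) (gbox_mono (giff_mpr h))

private lemma gneg_iff {φ ψ : Formula L} (h : GLP (φ.iff ψ)) : GLP (φ.neg.iff ψ.neg) :=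
  giff_intro (gcp1 (giff_mpr h)) (gcp1 (giff_mp h))

private lemma gand_cong_right {θ φ ψ : Formula L} (h : GLP (φ.iff ψ)) :
    GLP ((θ.and φ).iff (θ.and ψ)) :=
  giff_intro
    (gand_imp_intro (gand_left _ _) (gtrans (gand_right _ _) (giff_mp h)))
    (gand_imp_intro (gand_left _ _) (gtrans (gand_right _ _) (giff_mpr h)))

/-- `⟨β⟩⟨α⟩X → ⟨α⟩X` for `α ≤ β`. -/
private lemma gdia_absorb {α β : L} (h : α ≤ β) (X : Formula L) :
    GLP ((Formula.dia β (Formula.dia α X)).imp (Formula.dia α X)) :=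
  gcp1 (gtrans (GLP.trans α β X.neg h) (gbox_mono (gdni _)))

/-- `¬[β](x → ¬y) ↔ ⟨β⟩(x ∧ y)`. -/
private lemma gdia_rel_iff (β : L) (x y : Formula L) :
    GLP ((Formula.box β (x.imp y.neg)).neg.iff (Formula.dia β (x.and y))) :=
  gneg_iff (gbox_iff (giff_intro (gdni _) (gdne _)))

/-- Relativization of all modalities `≥ α` to `θ`. -/
private def rel (α : L) (θ : Formula L) : Formula L → Formula L
  | .bot => .bot
  | .var n => .var n
  | .imp φ ψ => .imp (rel α θ φ) (rel α θ ψ)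
  | .box β φ => if α ≤ β then .box β (θ.imp (rel α θ φ)) else .box β (rel α θ φ)

private lemma rel_neg (α : L) (θ φ : Formula L) : rel α θ φ.neg = (rel α θ φ).neg := rfl

/-- Relativization preserves provability. -/
private lemma rel_pres (α : L) (θ : Formula L) {φ : Formula L} (h : GLP φ) :
    GLP (rel α θ φ) := by
  induction h with
  | k1 φ ψ => exact GLP.k1 _ _
  | k2 φ ψ χ => exact GLP.k2 _ _ _
  | k3 φ ψ => exact GLP.k3 _ _
  | dist γ φ ψ =>
      simp only [rel]
      by_cases hγ : α ≤ γ
      · simp only [if_pos hγ]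
        exact gtrans (gbox_mono (GLP.k2 θ _ _)) (GLP.dist γ _ _)
      · simp only [if_neg hγ]
        exact GLP.dist γ _ _
  | lob γ φ =>
      simp only [rel]
      by_cases hγ : α ≤ γ
      · simp only [if_pos hγ]
        set a := rel α θ φ with ha
        refine gtrans (gbox_mono ?_) (GLP.lob γ (θ.imp a))
        exact show Ded [θ.imp ((Formula.box γ (θ.imp a)).imp a),
            Formula.box γ (θ.imp a), θ] a from dmp (dmp dax0 dax2) dax1
      · simp only [if_neg hγ]
        exact GLP.lob γ _
  | trans γ δ φ hγδ =>
      simp only [rel]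
      by_cases hγ : α ≤ γ
      · simp only [if_pos hγ, if_pos (hγ.trans hγδ)]
        exact gtrans (GLP.trans γ δ _ hγδ) (gbox_mono (GLP.k1 _ θ))
      · simp only [if_neg hγ]
        by_cases hδ : α ≤ δ
        · simp only [if_pos hδ]
          exact gtrans (GLP.trans γ δ _ hγδ) (gbox_mono (GLP.k1 _ θ))
        · simp only [if_neg hδ]
          exact GLP.trans γ δ _ hγδ
  | negintro γ δ φ hγδ =>
      by_cases hγ : α ≤ γ
      · have hδ : α ≤ δ := hγ.trans hγδ.le
        simp only [Formula.dia, rel_neg, rel, if_pos hγ, if_pos hδ]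
        set a := rel α θ φ with ha
        have hDE := gdia_rel_iff γ θ a
        exact gtrans (giff_mp hDE) (gtrans (GLP.negintro γ δ (θ.and a) hγδ)
          (gbox_mono (gtrans (giff_mpr hDE) (GLP.k1 _ θ))))
      · simp only [Formula.dia, rel_neg, rel, if_neg hγ]
        by_cases hδ : α ≤ δ
        · simp only [if_pos hδ]
          exact gtrans (GLP.negintro γ δ (rel α θ φ) hγδ) (gbox_mono (GLP.k1 _ θ))
        · simp only [if_neg hδ]
          exact GLP.negintro γ δ (rel α θ φ) hγδ
  | mono γ δ φ hγδ =>
      simp only [rel]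
      by_cases hγ : α ≤ γ
      · simp only [if_pos hγ, if_pos (hγ.trans hγδ)]
        exact GLP.mono γ δ _ hγδ
      · simp only [if_neg hγ]
        by_cases hδ : α ≤ δ
        · simp only [if_pos hδ]
          exact gtrans (GLP.mono γ δ _ hγδ) (gbox_mono (GLP.k1 _ θ))
        · simp only [if_neg hδ]
          exact GLP.mono γ δ _ hγδ
  | mp φ ψ h1 h2 ih1 ih2 => exact gmp ih1 ih2
  | nec γ φ h ih =>
      simp only [rel]
      by_cases hγ : α ≤ γ
      · simp only [if_pos hγ]
        exact GLP.nec γ _ (gmp (GLP.k1 _ θ) ih)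
      · simp only [if_neg hγ]
        exact GLP.nec γ _ ih

private lemma gtop : GLP (Formula.top (L := L)) := gid .bot

/-- `worm (A ++ α::C) → ⟨α⟩worm C` for `A ∈ 𝕎_α`. -/
private lemma worm_append_to_theta (α : L) (C : List L) :
    ∀ A : List L, (∀ β ∈ A, α ≤ β) →
      GLP ((worm (A ++ α :: C)).imp (Formula.dia α (worm C)))
  | [], _ => gid _
  | β :: A', hA => by
      have hβ : α ≤ β := hA β (by simp)
      have ih := worm_append_to_theta α C A' (fun γ hγ => hA γ (by simp [hγ]))
      show GLP ((Formula.dia β (worm (A' ++ α :: C))).imp _)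
      exact gtrans (gdia_mono ih) (gdia_absorb hβ (worm C))

/-- Main decomposition: `worm (A ++ α::C) ↔ θ ∧ rel α θ (worm A)` for `A ∈ 𝕎_α`,
where `θ = ⟨α⟩ worm C`. -/
private lemma worm_append_iff (α : L) (C : List L) :
    ∀ A : List L, (∀ β ∈ A, α ≤ β) →
      GLP ((worm (A ++ α :: C)).iff
        ((Formula.dia α (worm C)).and (rel α (Formula.dia α (worm C)) (worm A))))
  | [], _ => by
      show GLP ((Formula.dia α (worm C)).iff _)
      exact giff_intro (gand_imp_intro (gid _) (gmp (GLP.k1 _ _) gtop)) (gand_left _ _)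
  | β :: A', hA => by
      set θ := Formula.dia α (worm C) with hθdef
      have hβ : α ≤ β := hA β (by simp)
      have ih := worm_append_iff α C A' (fun γ hγ => hA γ (by simp [hγ]))
      set RA := rel α θ (worm A') with hRA
      have hconv : GLP ((rel α θ (worm (β :: A'))).iff (Formula.dia β (θ.and RA))) := by
        show GLP ((rel α θ (Formula.dia β (worm A'))).iff _)
        simp only [Formula.dia, rel_neg, rel, if_pos hβ]
        exact gdia_rel_iff β θ RA
      show GLP ((Formula.dia β (worm (A' ++ α :: C))).iff _)
      refine giff_intro (gand_imp_intro ?_ ?_) ?_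
      · exact worm_append_to_theta α C (β :: A') hA
      · exact gtrans (gdia_mono (giff_mp ih)) (giff_mpr hconv)
      · exact gtrans (gand_right _ _) (gtrans (giff_mp hconv) (gdia_mono (giff_mpr ih)))

end Aux


/-- If `A, B ∈ 𝕎_α` and `GLP ⊢ A ↔ B`, then `GLP ⊢ A⟨α⟩C ↔ B⟨α⟩C`. -/
theorem concat_congr {L : Type} [LinearOrder L] (α : L) (A B C : List L)
    (hA : ∀ β ∈ A, α ≤ β) (hB : ∀ β ∈ B, α ≤ β)
    (h : GLP ((worm A).iff (worm B))) :
    GLP ((worm (A ++ α :: C)).iff (worm (B ++ α :: C))) := by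
  set θ := Formula.dia α (worm C) with hθ
  have hr : GLP ((rel α θ (worm A)).iff (rel α θ (worm B))) := rel_pres α θ h
  exact giff_trans (worm_append_iff α C A hA)
    (giff_trans (gand_cong_right hr) (giff_symm (worm_append_iff α C B hB)))
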